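/- Let r₁, …, r_G be real numbers with G ≥ 1, let β > 0, let r̄ = (1/G)·Σᵢ rᵢ, and set Âᵢ = rᵢ − r̄ + β. Then (1/G)·Σᵢ W₀(exp(Âᵢ/β)) ≥ 1. -/

import Mathlib

lemma lambert_exp_lower (W : ℝ → ℝ)
    (hW : ∀ z : ℝ, 0 ≤ z → 0 ≤ W z ∧ W z * Real.exp (W z) = z)
    (u : ℝ) : (u + 1) / 2 ≤ W (Real.exp u) := by
  obtain ⟨h0, heq⟩ := hW _ (Real.exp_pos u).le
  set w := W (Real.exp u) with hw
  have hwpos : 0 < w := by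
    rcases h0.lt_or_eq with h | h
    · exact h
    · exfalso
      rw [← h, zero_mul] at heq
      exact (Real.exp_pos u).ne' heq.symm
  have hlog : Real.log w + w = u := by
    have h := congrArg Real.log heq
    rwa [Real.log_mul hwpos.ne' (Real.exp_pos _).ne', Real.log_exp, Real.log_exp] at h
  have hle := Real.log_le_sub_one_of_pos hwpos
  linarith

/-- For rewards `r₁,…,r_G`, `β > 0`, `r̄` the group mean, and `Âᵢ = rᵢ − r̄ + β`,
we have `(1/G) Σᵢ W₀(exp(Âᵢ/β)) ≥ 1`. -/
theorem shifted_mean_advantage_lambert_mass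
    (W : ℝ → ℝ)
    (hW : ∀ z : ℝ, 0 ≤ z → 0 ≤ W z ∧ W z * Real.exp (W z) = z)
    (G : ℕ) (hG : 1 ≤ G) (r : Fin G → ℝ) (β : ℝ) (hβ : 0 < β)
    (rbar : ℝ) (hrbar : rbar = (1 / (G : ℝ)) * ∑ i, r i)
    (A : Fin G → ℝ) (hA : ∀ i, A i = r i - rbar + β) :
    1 ≤ (1 / (G : ℝ)) * ∑ i, W (Real.exp (A i / β)) := by
  have hGpos : (0 : ℝ) < (G : ℝ) := by exact_mod_cast hG
  have hsumr : (G : ℝ) * rbar = ∑ i, r i := by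
    rw [hrbar]; field_simp
  have hsumA : ∑ i, A i = (G : ℝ) * β := by
    simp only [hA]
    rw [Finset.sum_add_distrib, Finset.sum_sub_distrib, Finset.sum_const,
      Finset.card_univ, Fintype.card_fin, nsmul_eq_mul, ← hsumr]
    simp [Finset.card_univ]
  have hpt : ∀ i ∈ Finset.univ, (A i / β + 1) / 2 ≤ W (Real.exp (A i / β)) :=
    fun i _ => lambert_exp_lower W hW _
  have hsum := Finset.sum_le_sum hpt
  have hlhs : ∑ i : Fin G, (A i / β + 1) / 2 = (G : ℝ) := by
    rw [show (fun i => (A i / β + 1) / 2) = fun i => A i * (1 / (2 * β)) + 1 / 2 by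
      funext i; field_simp]
    rw [Finset.sum_add_distrib, ← Finset.sum_mul, hsumA, Finset.sum_const,
      Finset.card_univ, Fintype.card_fin, nsmul_eq_mul]
    field_simp
    ring
  rw [hlhs] at hsum
  have h2 := mul_le_mul_of_nonneg_left hsum (le_of_lt (one_div_pos.mpr hGpos))
  have h1 : (1 / (G : ℝ)) * (G : ℝ) = 1 := by field_simp
  linarith
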